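/- Let n ≥ 1 and let 0 = W_0 < W_1 < ⋯ < W_n be real numbers, and set a_i = W_i − W_{i−1} > 0 for 1 ≤ i ≤ n. Let B = [0,W_1] × ⋯ × [0,W_n], for a permutation π let C_π = {x ∈ B : x_{π(1)} ≥ ⋯ ≥ x_{π(n)}}, and for ρ ∈ {1,…,n}^n let B_ρ = (W_{ρ_1−1}, W_{ρ_1}) × ⋯ × (W_{ρ_n−1}, W_{ρ_n}) and let G_ρ be the stabilizer of ρ under the action of the symmetric group S_n permuting coordinates of ρ. Then for every ρ and every permutation π: if C_π ∩ B_ρ = ∅ then Vol(C_π ∩ B_ρ) = 0, and otherwise Vol(C_π ∩ B_ρ) = (a_{ρ_1} a_{ρ_2} ⋯ a_{ρ_n}) / |G_ρ|. -/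

import Mathlib

open MeasureTheory

/-- The box `[0, W₁] × ⋯ × [0, Wₙ]` (0-indexed: coordinate `i` ranges over `[0, W (i+1)]`). -/
def box (n : ℕ) (W : ℕ → ℝ) : Set (Fin n → ℝ) :=
  {x | ∀ i : Fin n, x i ∈ Set.Icc 0 (W ((i : ℕ) + 1))}

/-- The region `C_π = {x ∈ B : x_{π(1)} ≥ x_{π(2)} ≥ ⋯ ≥ x_{π(n)}}`. -/
def Cpi (n : ℕ) (W : ℕ → ℝ) (π : Equiv.Perm (Fin n)) : Set (Fin n → ℝ) :=
  {x ∈ box n W | ∀ i j : Fin n, i ≤ j → x (π j) ≤ x (π i)}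

/-- The open box `B_ρ = (W_{ρ₁-1}, W_{ρ₁}) × ⋯ × (W_{ρₙ-1}, W_{ρₙ})`; a value `ρ i : Fin n`
represents the 1-indexed value `(ρ i : ℕ) + 1`. -/
def Brho (n : ℕ) (W : ℕ → ℝ) (ρ : Fin n → Fin n) : Set (Fin n → ℝ) :=
  {x | ∀ i : Fin n, x i ∈ Set.Ioo (W ((ρ i : ℕ))) (W ((ρ i : ℕ) + 1))}

/-- The stabilizer `G_ρ ≤ Sₙ` of `ρ` under the coordinate-permuting action
`(σ • ρ) i = ρ (σ⁻¹ i)` (equivalently, `τ` stabilizes `ρ` iff `ρ ∘ τ = ρ`). -/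
def stab (n : ℕ) (ρ : Fin n → Fin n) : Subgroup (Equiv.Perm (Fin n)) where
  carrier := {τ | ρ ∘ ⇑τ = ρ}
  one_mem' := rfl
  mul_mem' := by
    intro a b ha hb
    simp only [Set.mem_setOf_eq] at *
    show ρ ∘ (⇑a ∘ ⇑b) = ρ
    rw [← Function.comp_assoc, ha, hb]
  inv_mem' := by
    intro a ha
    simp only [Set.mem_setOf_eq] at *
    funext i
    have h := congrFun ha (a⁻¹ i)
    simpa using h.symm

/-- Monotonicity of `W` on `{0,…,n}`. -/
lemma Wle {n : ℕ} {W : ℕ → ℝ} (hW : ∀ i, i < n → W i < W (i + 1)) :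
    ∀ {a b : ℕ}, a ≤ b → b ≤ n → W a ≤ W b := by
  intro a b hab
  induction hab with
  | refl => exact fun _ => le_rfl
  | @step m h ih =>
      intro hm
      exact le_trans (ih (le_trans (Nat.le_succ m) hm)) (le_of_lt (hW m (Nat.lt_of_succ_le hm)))

lemma Wlt {n : ℕ} {W : ℕ → ℝ} (hW : ∀ i, i < n → W i < W (i + 1)) :
    ∀ {a b : ℕ}, a < b → b ≤ n → W a < W b := by
  intro a b hab hbn
  obtain ⟨c, rfl⟩ : ∃ c, b = c + 1 := ⟨b - 1, by omega⟩
  exact lt_of_le_of_lt (Wle hW (Nat.lt_succ_iff.mp hab) (le_trans (Nat.le_succ c) hbn))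
    (hW c (Nat.lt_of_succ_le hbn))

/-- The "antitone" region inside the open box `B_σ`. -/
def Aset (n : ℕ) (W : ℕ → ℝ) (σ : Fin n → Fin n) : Set (Fin n → ℝ) :=
  Brho n W σ ∩ {y | ∀ i j : Fin n, i ≤ j → y j ≤ y i}

lemma Brho_eq_pi (n : ℕ) (W : ℕ → ℝ) (σ : Fin n → Fin n) :
    Brho n W σ = Set.pi Set.univ (fun i => Set.Ioo (W ((σ i : ℕ))) (W ((σ i : ℕ) + 1))) := by
  ext y; simp [Brho, Set.mem_pi]

lemma measurable_Brho (n : ℕ) (W : ℕ → ℝ) (σ : Fin n → Fin n) :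
    MeasurableSet (Brho n W σ) := by
  rw [Brho_eq_pi]
  exact MeasurableSet.univ_pi fun i => measurableSet_Ioo

lemma measurable_anti (n : ℕ) :
    MeasurableSet {y : Fin n → ℝ | ∀ i j : Fin n, i ≤ j → y j ≤ y i} := by
  have : {y : Fin n → ℝ | ∀ i j : Fin n, i ≤ j → y j ≤ y i} =
      ⋂ (i : Fin n), ⋂ (j : Fin n), {y | i ≤ j → y j ≤ y i} := by
    ext y; simp
  rw [this]
  refine MeasurableSet.iInter fun i => MeasurableSet.iInter fun j => ?_
  by_cases h : i ≤ j
  · simp only [h, true_implies]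
    exact measurableSet_le (measurable_pi_apply j) (measurable_pi_apply i)
  · simp [h]

lemma measurable_Aset (n : ℕ) (W : ℕ → ℝ) (σ : Fin n → Fin n) :
    MeasurableSet (Aset n W σ) :=
  (measurable_Brho n W σ).inter (measurable_anti n)

lemma noninj_null (n : ℕ) : volume {y : Fin n → ℝ | ¬ Function.Injective y} = 0 := by
  have hsub : {y : Fin n → ℝ | ¬ Function.Injective y} ⊆
      ⋃ (i : Fin n), ⋃ (j : Fin n), ⋃ (_ : i ≠ j), {y | y i = y j} := by
    intro y hy
    simp only [Function.Injective, not_forall] at hy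
    obtain ⟨i, j, hij, hne⟩ := hy
    exact Set.mem_iUnion.2 ⟨i, Set.mem_iUnion.2 ⟨j, Set.mem_iUnion.2 ⟨hne, hij⟩⟩⟩
  refine measure_mono_null hsub ?_
  refine measure_iUnion_null fun i => measure_iUnion_null fun j => measure_iUnion_null fun hij => ?_
  have : {y : Fin n → ℝ | y i = y j} =
      (LinearMap.ker ((LinearMap.proj i : (Fin n → ℝ) →ₗ[ℝ] ℝ) - LinearMap.proj j) : Set _) := by
    ext y; simp [sub_eq_zero]
  rw [this]
  apply MeasureTheory.Measure.addHaar_submodule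
  intro h
  have hmem : Pi.single i (1:ℝ) ∈
      LinearMap.ker ((LinearMap.proj i : (Fin n → ℝ) →ₗ[ℝ] ℝ) - LinearMap.proj j) := by
    rw [h]; exact Submodule.mem_top
  rw [LinearMap.mem_ker, LinearMap.sub_apply, LinearMap.proj_apply, LinearMap.proj_apply,
    Pi.single_eq_same, Pi.single_eq_of_ne (Ne.symm hij), sub_zero] at hmem
  exact one_ne_zero hmem

lemma comp_perm_measurePreserving (n : ℕ) (τ : Equiv.Perm (Fin n)) :
    MeasurePreserving (fun y : Fin n → ℝ => y ∘ ⇑τ) volume volume := by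
  have h := volume_measurePreserving_piCongrLeft (fun _ : Fin n => ℝ) (τ.symm : Fin n ≃ Fin n)
  have heq : ⇑(MeasurableEquiv.piCongrLeft (fun _ : Fin n => ℝ) (τ.symm : Fin n ≃ Fin n)) =
      fun y : Fin n → ℝ => y ∘ ⇑τ := by
    funext y j
    have h2 := MeasurableEquiv.piCongrLeft_apply_apply (τ.symm : Fin n ≃ Fin n)
      (β := fun _ : Fin n => ℝ) y (τ j)
    simpa using h2
  rwa [heq] at h

/-- If permutations `τ₁, τ₂` both make `f` antitone, the compositions agree. -/
lemma anti_unique {n : ℕ} {α : Type*} [LinearOrder α] {f : Fin n → α}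
    {τ₁ τ₂ : Equiv.Perm (Fin n)}
    (h1 : Antitone (f ∘ ⇑τ₁)) (h2 : Antitone (f ∘ ⇑τ₂)) : f ∘ ⇑τ₁ = f ∘ ⇑τ₂ := by
  have := Tuple.unique_monotone (f := OrderDual.toDual ∘ f) (σ := τ₁) (τ := τ₂)
    (fun i j hij => h1 hij) (fun i j hij => h2 hij)
  funext i
  exact congrFun this i

/-- Conjugation isomorphism between the stabilizers of `ρ ∘ π` and `ρ`. -/
lemma card_stab_comp (n : ℕ) (ρ : Fin n → Fin n) (π : Equiv.Perm (Fin n)) :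
    Nat.card (stab n (ρ ∘ ⇑π)) = Nat.card (stab n ρ) := by
  refine Nat.card_congr ⟨fun τ => ⟨π * τ.1 * π⁻¹, ?_⟩, fun τ => ⟨π⁻¹ * τ.1 * π, ?_⟩, ?_, ?_⟩
  · have hτ : (ρ ∘ ⇑π) ∘ ⇑τ.1 = ρ ∘ ⇑π := τ.2
    show ρ ∘ ⇑(π * τ.1 * π⁻¹) = ρ
    funext i
    have := congrFun hτ (π⁻¹ i)
    simpa using this
  · have hτ : ρ ∘ ⇑τ.1 = ρ := τ.2
    show (ρ ∘ ⇑π) ∘ ⇑(π⁻¹ * τ.1 * π) = ρ ∘ ⇑π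
    funext i
    have := congrFun hτ (π i)
    simpa using this
  · intro τ; ext x; simp [mul_assoc]
  · intro τ; ext x; simp [mul_assoc]

/-- Core counting lemma: for antitone `σ`, `|stab σ| * vol(Aset σ) = vol(B_σ)`. -/
lemma core_count (n : ℕ) (W : ℕ → ℝ) (hW : ∀ i, i < n → W i < W (i + 1))
    (σ : Fin n → Fin n) (hσ : ∀ i j : Fin n, i ≤ j → σ j ≤ σ i) :
    (Nat.card (stab n σ) : ENNReal) * volume (Aset n W σ) =
      ENNReal.ofReal (∏ i : Fin n, (W ((σ i : ℕ) + 1) - W ((σ i : ℕ)))) := by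
  classical
  -- S τ := preimage of Aset under y ↦ y ∘ τ
  set S : Equiv.Perm (Fin n) → Set (Fin n → ℝ) :=
    fun τ => (fun y : Fin n → ℝ => y ∘ ⇑τ) ⁻¹' (Aset n W σ) with hS
  set N : Set (Fin n → ℝ) := {y | ¬ Function.Injective y} with hN
  have hNmeas : MeasurableSet N := by
    have : N = {y : Fin n → ℝ | Function.Injective y}ᶜ := by ext y; simp [hN]
    rw [this]
    refine MeasurableSet.compl ?_
    have : {y : Fin n → ℝ | Function.Injective y} =
        ⋂ (i : Fin n), ⋂ (j : Fin n), {y | y i = y j → i = j} := by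
      ext y; simp [Function.Injective]
    rw [this]
    refine MeasurableSet.iInter fun i => MeasurableSet.iInter fun j => ?_
    by_cases h : i = j
    · simp [h]
    · have : {y : Fin n → ℝ | y i = y j → i = j} = {y : Fin n → ℝ | y i = y j}ᶜ := by
        ext y; simp [h]
      rw [this]
      exact (measurableSet_eq_fun (measurable_pi_apply i) (measurable_pi_apply j)).compl
  have hSmeas : ∀ τ, MeasurableSet (S τ) :=
    fun τ => (comp_perm_measurePreserving n τ).measurable (measurable_Aset n W σ)
  have hSvol : ∀ τ, volume (S τ) = volume (Aset n W σ) :=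
    fun τ => (comp_perm_measurePreserving n τ).measure_preimage
      (measurable_Aset n W σ).nullMeasurableSet
  -- finset of the stabilizer
  set Hf : Finset (Equiv.Perm (Fin n)) := Finset.univ.filter (fun τ => τ ∈ stab n σ) with hHf
  have hcard : (Nat.card (stab n σ)) = Hf.card := by
    rw [Nat.card_eq_fintype_card]
    rw [hHf]
    exact (Fintype.card_subtype _)
  -- (ii) S τ ⊆ Brho σ for τ ∈ stab
  have hSsub : ∀ τ ∈ stab n σ, S τ ⊆ Brho n W σ := by
    intro τ hτ y hy
    have hbox := hy.1
    intro j
    have h1 := hbox (τ⁻¹ j)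
    have h2 : σ (τ (τ⁻¹ j)) = σ (τ⁻¹ j) := congrFun (hτ : σ ∘ ⇑τ = σ) (τ⁻¹ j)
    simp only [Function.comp_apply, Equiv.Perm.coe_inv, Equiv.apply_symm_apply] at h1 h2
    rwa [← h2] at h1
  -- (iii) pairwise: different stabilizer elements give disjoint S off N
  have hdisj : ∀ τ₁ τ₂ : Equiv.Perm (Fin n), τ₁ ≠ τ₂ → (S τ₁ ∩ S τ₂) ⊆ N := by
    intro τ₁ τ₂ hne y hy
    by_contra hyN
    have hyinj : Function.Injective y := not_not.mp hyN
    have h1 : Antitone (y ∘ ⇑τ₁) := fun i j hij => hy.1.2 i j hij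
    have h2 : Antitone (y ∘ ⇑τ₂) := fun i j hij => hy.2.2 i j hij
    have := anti_unique h1 h2
    exact hne (Equiv.ext fun i => hyinj (congrFun this i))
  -- (i) cover: every injective point of Brho σ lies in some S τ, τ ∈ stab
  have hcover : ∀ y ∈ Brho n W σ, y ∉ N → ∃ τ ∈ stab n σ, y ∈ S τ := by
    intro y hy hyN
    set τ : Equiv.Perm (Fin n) := Tuple.sort (OrderDual.toDual ∘ y) with hτdef
    have hanti : Antitone (y ∘ ⇑τ) := fun i j hij =>
      Tuple.monotone_sort (OrderDual.toDual ∘ y) hij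
    -- σ ∘ τ is antitone
    have hστanti : Antitone (σ ∘ ⇑τ) := by
      intro i j hij
      by_contra hlt
      push_neg at hlt
      simp only [Function.comp_apply] at hlt
      have hb1 : y (τ i) < W ((σ (τ i) : ℕ) + 1) := (hy (τ i)).2
      have hb2 : W ((σ (τ j) : ℕ)) < y (τ j) := (hy (τ j)).1
      have hle : W ((σ (τ i) : ℕ) + 1) ≤ W ((σ (τ j) : ℕ)) :=
        Wle hW (Nat.succ_le_of_lt hlt) (le_of_lt (σ (τ j)).isLt)
      have : y (τ i) < y (τ j) := lt_of_lt_of_le (lt_of_lt_of_le hb1 hle) (le_of_lt hb2)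
      exact absurd (hanti hij) (not_le.mpr this)
    have hστ : σ ∘ ⇑τ = σ := by
      have h1 : Antitone (σ ∘ ⇑(1 : Equiv.Perm (Fin n))) := by
        intro i j hij; exact hσ i j hij
      have := anti_unique (f := σ) (τ₁ := τ) (τ₂ := 1) hστanti h1
      simpa using this
    refine ⟨τ, hστ, ?_, ?_⟩
    · intro i
      have := hy (τ i)
      have h2 : σ (τ i) = σ i := congrFun hστ i
      simpa [h2] using this
    · intro i j hij
      exact hanti hij
  -- squeeze
  have hBmeas := measurable_Brho n W σ
  have hNnull : volume N = 0 := noninj_null n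
  set U : Set (Fin n → ℝ) := ⋃ τ ∈ Hf, (S τ \ N) with hU
  have hU1 : Brho n W σ \ N ⊆ U := by
    intro y hy
    obtain ⟨τ, hτ, hyS⟩ := hcover y hy.1 hy.2
    exact Set.mem_biUnion (Finset.mem_filter.mpr ⟨Finset.mem_univ _, hτ⟩) ⟨hyS, hy.2⟩
  have hU2 : U ⊆ Brho n W σ := by
    intro y hy
    simp only [hU, Set.mem_iUnion] at hy
    obtain ⟨τ, hτ, hyS, _⟩ := hy
    exact hSsub τ (Finset.mem_filter.mp hτ).2 hyS
  have hUvol : volume U = volume (Brho n W σ) := by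
    refine le_antisymm (measure_mono hU2) ?_
    calc volume (Brho n W σ) = volume (Brho n W σ \ N) := (measure_diff_null hNnull).symm
    _ ≤ volume U := measure_mono hU1
  have hUsum : volume U = Hf.card * volume (Aset n W σ) := by
    rw [hU, measure_biUnion_finset]
    · rw [Finset.sum_congr rfl (fun τ _ => ?_), Finset.sum_const, nsmul_eq_mul]
      rw [measure_diff_null hNnull, hSvol]
    · intro τ₁ h1 τ₂ h2 hne
      refine Set.disjoint_left.mpr fun y hy1 hy2 => ?_
      exact hy1.2 (hdisj τ₁ τ₂ hne ⟨hy1.1, hy2.1⟩)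
    · intro τ _
      exact (hSmeas τ).diff hNmeas
  have hBvol : volume (Brho n W σ) =
      ENNReal.ofReal (∏ i : Fin n, (W ((σ i : ℕ) + 1) - W ((σ i : ℕ)))) := by
    rw [Brho_eq_pi, volume_pi_pi]
    rw [ENNReal.ofReal_prod_of_nonneg]
    · exact Finset.prod_congr rfl fun i _ => (Real.volume_Ioo).symm ▸ rfl
    · intro i _
      have := Wle hW (Nat.le_succ (σ i : ℕ)) (Nat.succ_le_of_lt (σ i).isLt)
      linarith
  rw [hcard, ← hBvol, ← hUvol, hUsum]

lemma measurable_Cpi (n : ℕ) (W : ℕ → ℝ) (π : Equiv.Perm (Fin n)) :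
    MeasurableSet (Cpi n W π) := by
  have hbox : MeasurableSet (box n W) := by
    have : box n W = Set.pi Set.univ (fun i : Fin n => Set.Icc 0 (W ((i : ℕ) + 1))) := by
      ext y; simp [box, Set.mem_pi, Set.mem_Icc, Pi.le_def, forall_and]
    rw [this]
    exact MeasurableSet.univ_pi fun i => measurableSet_Icc
  have hord : MeasurableSet {x : Fin n → ℝ | ∀ i j : Fin n, i ≤ j → x (π j) ≤ x (π i)} := by
    have : {x : Fin n → ℝ | ∀ i j : Fin n, i ≤ j → x (π j) ≤ x (π i)} =
        (fun x : Fin n → ℝ => x ∘ ⇑π) ⁻¹' {y : Fin n → ℝ | ∀ i j : Fin n, i ≤ j → y j ≤ y i} := by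
      ext x; simp [Set.mem_preimage]
    rw [this]
    exact (comp_perm_measurePreserving n π).measurable (measurable_anti n)
  exact hbox.inter hord

theorem volume_computation (n : ℕ) (hn : 1 ≤ n) (W : ℕ → ℝ) (hW0 : W 0 = 0)
    (hW : ∀ i, i < n → W i < W (i + 1))
    (ρ : Fin n → Fin n) (π : Equiv.Perm (Fin n)) :
    (Cpi n W π ∩ Brho n W ρ = ∅ → volume (Cpi n W π ∩ Brho n W ρ) = 0) ∧
      (Cpi n W π ∩ Brho n W ρ ≠ ∅ →
        volume (Cpi n W π ∩ Brho n W ρ) =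
          ENNReal.ofReal
            ((∏ i : Fin n, (W ((ρ i : ℕ) + 1) - W ((ρ i : ℕ)))) /
              (Nat.card (stab n ρ) : ℝ))) := by
  constructor
  · intro h; rw [h]; exact measure_empty
  · intro hne
    obtain ⟨x, hx⟩ := Set.nonempty_iff_ne_empty.mpr hne
    have hxC : x ∈ Cpi n W π := hx.1
    have hxB : x ∈ Brho n W ρ := hx.2
    have hxbox : x ∈ box n W := hxC.1
    have hxord := hxC.2
    have hρle : ∀ i : Fin n, (ρ i : ℕ) ≤ (i : ℕ) := by
      intro i
      by_contra hlt
      push_neg at hlt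
      have h1 : x i ≤ W ((i : ℕ) + 1) := (hxbox i).2
      have h2 : W ((ρ i : ℕ)) < x i := (hxB i).1
      have h3 : W ((i : ℕ) + 1) ≤ W ((ρ i : ℕ)) :=
        Wle hW (Nat.succ_le_of_lt hlt) (le_of_lt (ρ i).isLt)
      linarith
    have hanti : ∀ i j : Fin n, i ≤ j → ρ (π j) ≤ ρ (π i) := by
      intro i j hij
      by_contra hlt
      push_neg at hlt
      have h1 : x (π i) < W ((ρ (π i) : ℕ) + 1) := (hxB (π i)).2
      have h2 : W ((ρ (π j) : ℕ)) < x (π j) := (hxB (π j)).1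
      have h3 : W ((ρ (π i) : ℕ) + 1) ≤ W ((ρ (π j) : ℕ)) :=
        Wle hW (Nat.succ_le_of_lt hlt) (le_of_lt (ρ (π j)).isLt)
      have h4 := hxord i j hij
      linarith
    have hsub : Brho n W ρ ⊆ box n W := by
      intro y hy i
      have h1 := hy i
      have h0 : (0:ℝ) ≤ W ((ρ i : ℕ)) := by
        rw [← hW0]; exact Wle hW (Nat.zero_le _) (le_of_lt (ρ i).isLt)
      have h2 : W ((ρ i : ℕ) + 1) ≤ W ((i : ℕ) + 1) :=
        Wle hW (Nat.succ_le_succ (hρle i)) (Nat.succ_le_of_lt i.isLt)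
      exact ⟨le_of_lt (lt_of_le_of_lt h0 h1.1), le_of_lt (lt_of_lt_of_le h1.2 h2)⟩
    -- transfer to the antitone region
    have hset : Aset n W (ρ ∘ ⇑π) =
        (fun y : Fin n → ℝ => y ∘ ⇑π⁻¹) ⁻¹' (Cpi n W π ∩ Brho n W ρ) := by
      ext y
      simp only [Set.mem_preimage, Set.mem_inter_iff, Aset, Cpi, Brho, box, Set.mem_inter_iff,
        Set.mem_setOf_eq, Function.comp_apply]
      constructor
      · rintro ⟨hB, hord⟩
        have hB' : ∀ i : Fin n, y (π⁻¹ i) ∈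
            Set.Ioo (W ((ρ i : ℕ))) (W ((ρ i : ℕ) + 1)) := by
          intro i
          have := hB (π⁻¹ i)
          simpa using this
        refine ⟨⟨fun i => hsub hB' i, fun i j hij => ?_⟩, hB'⟩
        simp only [Equiv.Perm.coe_inv, Equiv.symm_apply_apply]
        exact hord i j hij
      · rintro ⟨⟨_, hord⟩, hB⟩
        refine ⟨fun i => ?_, fun i j hij => ?_⟩
        · have := hB (π i)
          simpa using this
        · have := hord i j hij
          simpa using this
    have hmp := comp_perm_measurePreserving n π⁻¹
    have hvol : volume (Cpi n W π ∩ Brho n W ρ) = volume (Aset n W (ρ ∘ ⇑π)) := by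
      rw [hset]
      exact (hmp.measure_preimage
        ((measurable_Cpi n W π).inter (measurable_Brho n W ρ)).nullMeasurableSet).symm
    have hkey := core_count n W hW (ρ ∘ ⇑π) hanti
    have hprod : (∏ i : Fin n, (W (((ρ ∘ ⇑π) i : ℕ) + 1) - W (((ρ ∘ ⇑π) i : ℕ)))) =
        ∏ i : Fin n, (W ((ρ i : ℕ) + 1) - W ((ρ i : ℕ))) :=
      Equiv.prod_comp π (fun i => W ((ρ i : ℕ) + 1) - W ((ρ i : ℕ)))
    rw [card_stab_comp, hprod] at hkey
    have hkpos : 0 < Nat.card (stab n ρ) := Nat.card_pos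
    rw [hvol, ENNReal.ofReal_div_of_pos (by exact_mod_cast hkpos), ENNReal.ofReal_natCast,
      ENNReal.eq_div_iff (by exact_mod_cast hkpos.ne') (ENNReal.natCast_ne_top _)]
    exact hkey
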